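/- Let X be a Hausdorff scattered space with finite Cantor–Bendixson rank n (so X^(n) = ∅). Then the injective dimension of the abelian category of sheaves of ℚ-modules on X is at most n − 1: every sheaf of ℚ-modules on X admits an injective resolution of length at most n − 1. -/

import Mathlib

open CategoryTheory CategoryTheory.Limits TopCat TopologicalSpace Opposite

attribute [local instance] Classical.propDecidable

noncomputable section

/-- The Cantor–Bendixson derivative of a set `A`: the set of points of `A` that are not
isolated in the subspace `A`, i.e. the points of `A` that are accumulation points of `A`. -/
def cbDeriv {X : Type*} [TopologicalSpace X] (A : Set X) : Set X :=
  {x ∈ A | AccPt x (Filter.principal A)}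

/-- The finite Cantor–Bendixson derivatives of the space: `cbIter X k = X^(k)`. -/
def cbIter (X : Type*) [TopologicalSpace X] (k : ℕ) : Set X :=
  cbDeriv^[k] Set.univ

/-- The abelian category of sheaves of `ℚ`-modules on the topological space `X`. -/
abbrev SheafQ (X : TopCat.{0}) : Type 1 :=
  Sheaf (Opens.grothendieckTopology X) (ModuleCat.{0} ℚ)

instance moduleQ_injective (M : ModuleCat.{0} ℚ) : Injective M := by
  have hB : Module.Baer ℚ M := by
    intro I g
    rcases Ideal.eq_bot_or_top I with rfl | rfl
    · refine ⟨0, fun x hx => ?_⟩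
      rw [show (⟨x, hx⟩ : (⊥ : Ideal ℚ)) = 0 from Subsingleton.elim _ _, map_zero]
      rfl
    · refine ⟨LinearMap.toSpanSingleton ℚ M (g ⟨1, trivial⟩), fun x mem => ?_⟩
      have : (⟨x, mem⟩ : (⊤ : Ideal ℚ)) = x • ⟨1, trivial⟩ := by
        ext; simp
      rw [this, map_smul]
      rfl
  have : Module.Injective ℚ M := Module.Baer.injective hB
  exact Module.injective_object_of_injective_module (inj := this)

variable {C : Type*} [Category C] [Abelian C]

omit [Abelian C] in
lemma injective_of_isZero {Z : C} (h : IsZero Z) : Injective Z :=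
  ⟨fun {_ B} _ _ _ => ⟨h.from_ B, h.eq_of_tgt _ _⟩⟩

/-- Constructor for injective resolutions from a cochain complex and exactness data. -/
def InjectiveResolution.ofComplexData {Z : C} (K : CochainComplex C ℕ)
    (inj : ∀ n, Injective (K.X n)) (f : Z ⟶ K.X 0) (hf : f ≫ K.d 0 1 = 0)
    (hmono : Mono f) (hex0 : (ShortComplex.mk f (K.d 0 1) hf).Exact)
    (hex : ∀ n, K.ExactAt (n + 1)) : InjectiveResolution Z where
  cocomplex := K
  injective := inj
  ι := (CochainComplex.fromSingle₀Equiv K Z).symm ⟨f, hf⟩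
  quasiIso := ⟨fun n => by
    cases n with
    | zero =>
      rw [CochainComplex.quasiIsoAt₀_iff, ShortComplex.quasiIso_iff_of_zeros]
      · refine (ShortComplex.exact_and_mono_f_iff_of_iso ?_).2 ⟨hex0, hmono⟩
        exact ShortComplex.isoMk (Iso.refl _) (Iso.refl _) (Iso.refl _) (by exact (Category.id_comp f).trans ((CochainComplex.fromSingle₀Equiv_symm_apply_f_zero f hf).symm.trans (Category.comp_id _).symm))
            (by dsimp; exact (Category.id_comp _).trans (Category.comp_id _).symm)
      · rfl
      · rfl
      · exact K.shape 0 0 (by simp)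
    | succ n =>
      rw [quasiIsoAt_iff_exactAt]
      · exact hex n
      · apply CochainComplex.exactAt_succ_single_obj⟩

section Splice

variable {F G : C} (η : F ⟶ G) [Mono η] [Injective G]
  (J : InjectiveResolution (cokernel η))

/-- The cochain complex `G → J⁰ → J¹ → ⋯` obtained by splicing. -/
def spliceCocomplex : CochainComplex C ℕ :=
  CochainComplex.of
    (fun n => match n with | 0 => G | (k+1) => J.cocomplex.X k)
    (fun n => match n with
      | 0 => cokernel.π η ≫ ((CochainComplex.fromSingle₀Equiv _ _) J.ι).1
      | (k+1) => J.cocomplex.d k (k+1))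
    (fun n => match n with
      | 0 => by
          rw [Category.assoc, ((CochainComplex.fromSingle₀Equiv _ _) J.ι).2, comp_zero]
      | (k+1) => J.cocomplex.d_comp_d _ _ _)

lemma spliceCocomplex_X_zero : (spliceCocomplex η J).X 0 = G := rfl

lemma spliceCocomplex_X_succ (k : ℕ) :
    (spliceCocomplex η J).X (k + 1) = J.cocomplex.X k := rfl



lemma spliceCocomplex_d_zero :
    (spliceCocomplex η J).d 0 1 =
      cokernel.π η ≫ ((CochainComplex.fromSingle₀Equiv _ _) J.ι).1 := by
  simp [spliceCocomplex, CochainComplex.of, CochainComplex.of.d]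

lemma spliceCocomplex_d_succ (k : ℕ) :
    (spliceCocomplex η J).d (k + 1) (k + 2) = J.cocomplex.d k (k + 1) := by
  simp [spliceCocomplex, CochainComplex.of, CochainComplex.of.d]

/-- Splicing a short exact sequence `0 → F → G → Q → 0` with `G` injective and an injective
resolution of `Q` yields an injective resolution of `F`. -/
def spliceInjectiveResolution : InjectiveResolution F := by
  have hg0 : Mono ((CochainComplex.fromSingle₀Equiv J.cocomplex (cokernel η)) J.ι).1 :=
    (inferInstance : Mono (J.ι.f 0))
  refine InjectiveResolution.ofComplexData (spliceCocomplex η J)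
    (fun n => match n with
      | 0 => ‹Injective G›
      | (k+1) => J.injective k)
    η ?_ ‹Mono η› ?_ ?_
  · rw [spliceCocomplex_d_zero]; exact (cokernel.condition_assoc η _).trans zero_comp
  · -- exactness at degree 0
    let S₁ := ShortComplex.mk η (cokernel.π η) (cokernel.condition η)
    have h₁ : S₁.Exact := ShortComplex.exact_of_g_is_cokernel _ (cokernelIsCokernel η)
    let φ : S₁ ⟶ ShortComplex.mk η ((spliceCocomplex η J).d 0 1) (by
        rw [spliceCocomplex_d_zero]; exact (cokernel.condition_assoc η _).trans zero_comp) :=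
      { τ₁ := 𝟙 _
        τ₂ := 𝟙 _
        τ₃ := ((CochainComplex.fromSingle₀Equiv _ _) J.ι).1
        comm₁₂ := by simp [S₁]
        comm₂₃ := by
          show 𝟙 _ ≫ (spliceCocomplex η J).d 0 1 = cokernel.π η ≫ _
          rw [Category.id_comp, spliceCocomplex_d_zero]; rfl }
    have : Epi φ.τ₁ := by dsimp [φ]; infer_instance
    have : IsIso φ.τ₂ := by dsimp [φ]; infer_instance
    have : Mono φ.τ₃ := hg0
    exact (ShortComplex.exact_iff_of_epi_of_isIso_of_mono φ).1 h₁
  · -- exactness in higher degrees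
    intro n
    rw [HomologicalComplex.exactAt_iff' _ n (n+1) (n+2) (by simp)
      (by simp only [CochainComplex.next]; rfl)]
    match n with
    | 0 =>
      let S₂ := ShortComplex.mk (((CochainComplex.fromSingle₀Equiv _ _) J.ι).1)
        (J.cocomplex.d 0 1) (((CochainComplex.fromSingle₀Equiv _ _) J.ι).2)
      have h₂ : S₂.Exact :=
        ShortComplex.exact_of_f_is_kernel _ J.isLimitKernelFork
      let φ : (spliceCocomplex η J).sc' 0 1 2 ⟶ S₂ :=
        { τ₁ := cokernel.π η
          τ₂ := 𝟙 _
          τ₃ := 𝟙 _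
          comm₁₂ := by
            show cokernel.π η ≫ _ = (spliceCocomplex η J).d 0 1 ≫ 𝟙 _
            rw [Category.comp_id, spliceCocomplex_d_zero]; rfl
          comm₂₃ := by
            show 𝟙 _ ≫ J.cocomplex.d 0 1 = (spliceCocomplex η J).d 1 2 ≫ 𝟙 _
            rw [Category.comp_id, Category.id_comp,
              spliceCocomplex_d_succ η J 0] }
      have : Epi φ.τ₁ := by show Epi (cokernel.π η); infer_instance
      have : IsIso φ.τ₂ := by show IsIso (𝟙 _); infer_instance
      have : Mono φ.τ₃ := by show Mono (𝟙 _); infer_instance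
      exact (ShortComplex.exact_iff_of_epi_of_isIso_of_mono φ).2 h₂
    | (k+1) =>
      have h₂ := J.exact_succ k
      let φ : (spliceCocomplex η J).sc' (k+1) (k+2) (k+3) ⟶
          ShortComplex.mk _ _ (J.cocomplex.d_comp_d k (k+1) (k+2)) :=
        { τ₁ := 𝟙 _
          τ₂ := 𝟙 _
          τ₃ := 𝟙 _
          comm₁₂ := by
            show 𝟙 _ ≫ J.cocomplex.d k (k+1) = (spliceCocomplex η J).d (k+1) (k+2) ≫ 𝟙 _
            rw [Category.comp_id, Category.id_comp, spliceCocomplex_d_succ]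
          comm₂₃ := by
            show 𝟙 _ ≫ J.cocomplex.d (k+1) (k+2) = (spliceCocomplex η J).d (k+2) (k+3) ≫ 𝟙 _
            rw [Category.comp_id, Category.id_comp, spliceCocomplex_d_succ η J (k+1)] }
      have : Epi φ.τ₁ := by show Epi (𝟙 _); infer_instance
      have : IsIso φ.τ₂ := by show IsIso (𝟙 _); infer_instance
      have : Mono φ.τ₃ := by show Mono (𝟙 _); infer_instance
      exact (ShortComplex.exact_iff_of_epi_of_isIso_of_mono φ).2 h₂

end Splice

section PiLemmas

variable {D : Type*} [Category D]

omit [Abelian C] in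
lemma mono_pi_proj {β : Type*} (f : β → C) [HasProduct f] (x : β)
    (hz : ∀ y, y ≠ x → IsZero (f y)) : Mono (Pi.π f x) := by
  constructor
  intro A a b h
  apply Pi.hom_ext
  intro y
  by_cases hy : y = x
  · subst hy; exact h
  · exact (hz y hy).eq_of_tgt _ _

omit [Abelian C] in
lemma isZero_pi {β : Type*} (f : β → C) [HasProduct f] [HasZeroMorphisms C]
    (hz : ∀ y, IsZero (f y)) : IsZero (∏ᶜ f) := by
  rw [IsZero.iff_id_eq_zero]
  apply Pi.hom_ext
  intro y
  exact (hz y).eq_of_tgt _ _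

lemma isZero_cokernel_of_epi {A B : C} (f : A ⟶ B) [Epi f] : IsZero (cokernel f) := by
  rw [IsZero.iff_id_eq_zero]
  rw [← cancel_epi (cokernel.π f)]
  simp [cokernel.π_of_epi]

end PiLemmas

section Topology

variable {Y : Type*} [TopologicalSpace Y]

lemma cbDeriv_subset (A : Set Y) : cbDeriv A ⊆ A := fun _ h => h.1

lemma isolating_open_of_not_mem_cbDeriv {S : Set Y} (hS : IsClosed S) {x : Y}
    (hx : x ∉ cbDeriv S) :
    ∃ U : TopologicalSpace.Opens Y, x ∈ U ∧ ∀ y ∈ U, y ∈ S → y = x := by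
  by_cases hxS : x ∈ S
  · have hacc : ¬ AccPt x (Filter.principal S) := fun h => hx ⟨hxS, h⟩
    rw [accPt_iff_nhds] at hacc
    push_neg at hacc
    obtain ⟨U, hU, hU2⟩ := hacc
    exact ⟨⟨interior U, isOpen_interior⟩, mem_interior_iff_mem_nhds.2 hU,
      fun y hy hyS => hU2 y ⟨interior_subset hy, hyS⟩⟩
  · exact ⟨⟨Sᶜ, hS.isOpen_compl⟩, hxS, fun y hy hyS => absurd hyS hy⟩

lemma isClosed_cbDeriv {A : Set Y} (hA : IsClosed A) : IsClosed (cbDeriv A) := by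
  rw [← isOpen_compl_iff, isOpen_iff_mem_nhds]
  intro x hx
  obtain ⟨U, hxU, hU⟩ := isolating_open_of_not_mem_cbDeriv (S := A) hA hx
  · exact Filter.mem_of_superset (U.isOpen.mem_nhds hxU) (fun y hy hycb =>
      hx (by rwa [hU y hy (cbDeriv_subset A hycb)] at hycb))

lemma isClosed_cbIter (j : ℕ) : IsClosed (cbIter Y j) := by
  induction j with
  | zero => exact isClosed_univ
  | succ k ih =>
    rw [cbIter, Function.iterate_succ_apply']
    exact isClosed_cbDeriv ih

lemma cbIter_succ (j : ℕ) : cbIter Y (j + 1) = cbDeriv (cbIter Y j) :=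
  Function.iterate_succ_apply' _ _ _

end Topology

section SheafPart

variable {X : TopCat.{0}}

/-- The stalk of a sheaf of `ℚ`-modules. -/
abbrev stalkF (F : SheafQ X) (x : X) : ModuleCat.{0} ℚ :=
  TopCat.Presheaf.stalk F.val x

/-- The skyscraper sheaf at `x` with value the stalk of `F`. -/
abbrev skyF (F : SheafQ X) (x : X) : SheafQ X :=
  skyscraperSheaf x (stalkF F x)

/-- The product of all skyscrapers of stalks: the Godement-type injective envelope. -/
def GSheaf (F : SheafQ X) : SheafQ X :=
  ∏ᶜ (fun x : X => skyF F x)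

instance skyF_injective (F : SheafQ X) (x : X) : Injective (skyF F x) :=
  Injective.injective_of_adjoint (stalkSkyscraperSheafAdjunction x) (stalkF F x)

instance GSheaf_injective (F : SheafQ X) : Injective (GSheaf F) := by
  unfold GSheaf
  infer_instance

/-- The canonical morphism from `F` into the product of skyscrapers of its stalks. -/
def etaF (F : SheafQ X) : F ⟶ GSheaf F :=
  Pi.lift (fun x => (stalkSkyscraperSheafAdjunction x).unit.app F)

lemma etaF_pi (F : SheafQ X) (x : X) :
    etaF F ≫ Pi.π _ x = (stalkSkyscraperSheafAdjunction x).unit.app F :=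
  limit.lift_π _ _

/-- The stalk functor on sheaves, as a left adjoint. -/
abbrev LStalk (x : X) : SheafQ X ⥤ ModuleCat.{0} ℚ :=
  Sheaf.forget (ModuleCat.{0} ℚ) X ⋙ TopCat.Presheaf.stalkFunctor (ModuleCat.{0} ℚ) x

lemma LStalk_retraction (F : SheafQ X) (x : X) :
    (LStalk x).map (etaF F) ≫ ((LStalk x).map (Pi.π _ x) ≫
      (StalkSkyscraperPresheafAdjunctionAuxs.counit x).app (stalkF F x)) = 𝟙 _ := by
  erw [← Category.assoc, ← Functor.map_comp, etaF_pi]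
  exact (stalkSkyscraperSheafAdjunction x).left_triangle_components F

instance etaF_mono (F : SheafQ X) : Mono (etaF F) := by
  have : ∀ x : X, Mono ((TopCat.Presheaf.stalkFunctor (ModuleCat.{0} ℚ) x).map (etaF F).hom) := by
    intro x
    have h := LStalk_retraction F x
    haveI : IsSplitMono ((Presheaf.stalkFunctor (ModuleCat.{0} ℚ) x).map (etaF F).hom) :=
      IsSplitMono.mk' ⟨_, LStalk_retraction F x⟩
    infer_instance
  exact TopCat.Presheaf.mono_of_stalk_mono (etaF F)

lemma eq_of_isZero_mod {M : ModuleCat.{0} ℚ} (h : IsZero M) (a b : M) : a = b := by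
  have h0 : (𝟙 M : M ⟶ M) = 0 := h.eq_of_src _ _
  have ha : a = (𝟙 M : M ⟶ M) a := rfl
  have hb : b = (𝟙 M : M ⟶ M) b := rfl
  rw [ha, hb, h0]
  rfl

lemma skyF_app_isZero (F : SheafQ X) {S : Set X}
    (hsupp : ∀ y, y ∉ S → IsZero (stalkF F y)) {x : X} {U : Opens ↑X}
    (hU : ∀ y ∈ U, y ∈ S → y = x) {V : Opens ↑X} (hVU : V ≤ U) {y : X} (hy : y ≠ x) :
    IsZero ((skyF F y).val.obj (op V)) := by
  have h : (skyF F y).val.obj (op V) =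
      if y ∈ V then stalkF F y else ⊤_ (ModuleCat.{0} ℚ) := rfl
  rw [h]
  split_ifs with hmem
  · exact hsupp y (fun hyS => hy (hU y (hVU hmem) hyS))
  · exact (isZero_zero _).of_iso HasZeroObject.zeroIsoTerminal.symm

lemma pi_proj_app_mono (F : SheafQ X) {S : Set X}
    (hsupp : ∀ y, y ∉ S → IsZero (stalkF F y)) {x : X} {U : Opens ↑X}
    (hU : ∀ y ∈ U, y ∈ S → y = x) {V : Opens ↑X} (hVU : V ≤ U) :
    Mono ((Pi.π (fun y : X => skyF F y) x).hom.app (op V)) := by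
  let Φ : SheafQ X ⥤ ModuleCat.{0} ℚ :=
    (sheafToPresheaf _ _) ⋙ (evaluation (Opens ↑X)ᵒᵖ (ModuleCat.{0} ℚ)).obj (op V)
  have hlim : IsLimit (Φ.mapCone (limit.cone (Discrete.functor (fun y : X => skyF F y)))) :=
    isLimitOfPreserves Φ (limit.isLimit _)
  constructor
  intro Z a b hab
  apply hlim.hom_ext
  rintro ⟨y⟩
  by_cases hy : y = x
  · subst hy; exact hab
  · exact (skyF_app_isZero F hsupp hU hVU hy).eq_of_tgt _ _

lemma stalk_pi_proj_mono (F : SheafQ X) {S : Set X}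
    (hsupp : ∀ y, y ∉ S → IsZero (stalkF F y)) {x : X} {U : Opens ↑X} (hxU : x ∈ U)
    (hU : ∀ y ∈ U, y ∈ S → y = x) :
    Mono ((TopCat.Presheaf.stalkFunctor (ModuleCat.{0} ℚ) x).map
      (Pi.π (fun y : X => skyF F y) x).hom) := by
  let π : (GSheaf F).val ⟶ (skyF F x).val := (Pi.π (fun y : X => skyF F y) x).hom
  let 𝓖 : TopCat.Presheaf (ModuleCat.{0} ℚ) X := (GSheaf F).val
  let T : TopCat.Presheaf (ModuleCat.{0} ℚ) X := (skyF F x).val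
  show Mono ((TopCat.Presheaf.stalkFunctor (ModuleCat.{0} ℚ) x).map π)
  have key : ∀ t : 𝓖.stalk x,
      ((TopCat.Presheaf.stalkFunctor (ModuleCat.{0} ℚ) x).map π) t = 0 → t = 0 := by
    intro t ht
    obtain ⟨V₀, hxV₀, s₀, hs₀⟩ := TopCat.Presheaf.exists_germ_eq 𝓖 (x := x) t
    have hVle : V₀ ⊓ U ≤ V₀ := inf_le_left
    set V : Opens ↑X := V₀ ⊓ U with hV
    have hxV : x ∈ V := ⟨hxV₀, hxU⟩
    set s : 𝓖.obj (op V) := 𝓖.map (homOfLE hVle).op s₀ with hs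
    have hts : 𝓖.germ V x hxV s = t :=
      (TopCat.Presheaf.germ_res_apply 𝓖 (homOfLE hVle) x hxV s₀).trans hs₀
    have h1 : T.germ V x hxV (π.app (op V) s) = 0 := by
      have h := TopCat.Presheaf.stalkFunctor_map_germ_apply V x hxV π s
      exact h.symm.trans (by rw [hts]; exact ht)
    have h0 : T.germ V x hxV (0 : T.obj (op V)) = 0 := map_zero _
    obtain ⟨W, hxW, iU, iV, hWeq⟩ := TopCat.Presheaf.germ_eq T x hxV hxV _ _ (h1.trans h0.symm)
    have hW0 : T.map iU.op (π.app (op V) s) = 0 :=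
      hWeq.trans (map_zero _)
    have hnat : π.app (op W) (𝓖.map iU.op s) = T.map iU.op (π.app (op V) s) := by
      have hn := π.naturality iU.op
      calc π.app (op W) (𝓖.map iU.op s) = (𝓖.map iU.op ≫ π.app (op W)) s := rfl
        _ = (π.app (op V) ≫ T.map iU.op) s := by rw [← hn]
        _ = T.map iU.op (π.app (op V) s) := rfl
    have hmono : Mono (π.app (op W)) :=
      pi_proj_app_mono F hsupp hU (le_trans (leOfHom iU) inf_le_right)
    have hinj : Function.Injective (π.app (op W)) :=
      (ModuleCat.mono_iff_injective _).mp hmono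
    have hsz : 𝓖.map iU.op s = 0 := by
      apply hinj
      rw [hnat, hW0, map_zero]
    have ht2 : t = 𝓖.germ W x hxW (𝓖.map iU.op s) :=
      ((TopCat.Presheaf.germ_res_apply 𝓖 iU x hxW s).trans hts).symm
    rw [ht2, hsz, map_zero]
  have hinj : Function.Injective
      ((TopCat.Presheaf.stalkFunctor (ModuleCat.{0} ℚ) x).map π) := by
    intro u v huv
    have h : u - v = 0 := key _ (by rw [map_sub, huv, sub_self])
    exact sub_eq_zero.mp h
  exact ConcreteCategory.mono_of_injective _ hinj

lemma stalk_eta_isIso (F : SheafQ X) {S : Set X}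
    (hsupp : ∀ y, y ∉ S → IsZero (stalkF F y)) {x : X} {U : Opens ↑X} (hxU : x ∈ U)
    (hU : ∀ y ∈ U, y ∈ S → y = x) :
    IsIso ((LStalk x).map (etaF F)) := by
  haveI hm : Mono ((LStalk x).map (Pi.π (fun y : X => skyF F y) x)) :=
    stalk_pi_proj_mono F hsupp hxU hU
  haveI hc : IsIso ((StalkSkyscraperPresheafAdjunctionAuxs.counit x).app (stalkF F x)) := by
    dsimp [StalkSkyscraperPresheafAdjunctionAuxs.counit]
    exact Iso.isIso_hom _
  set v := (LStalk x).map (Pi.π (fun y : X => skyF F y) x) ≫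
    (StalkSkyscraperPresheafAdjunctionAuxs.counit x).app (stalkF F x) with hv
  haveI hvm : Mono v := @mono_comp _ _ _ _ _ _ hm _ (@IsIso.mono_of_iso _ _ _ _ _ hc)
  have h := LStalk_retraction F x
  replace h : (LStalk x).map (etaF F) ≫ v = 𝟙 _ := h
  have h2 : v ≫ (LStalk x).map (etaF F) = 𝟙 _ := by
    exact (cancel_mono v).1 ((Category.assoc _ _ _).trans ((congrArg (fun t => v ≫ t) h).trans ((Category.comp_id v).trans (Category.id_comp v).symm)))
  exact ⟨v, h, h2⟩

lemma stalk_cokernel_isZero (F : SheafQ X) {S : Set X} (hS : IsClosed S)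
    (hsupp : ∀ y, y ∉ S → IsZero (stalkF F y)) {x : X} (hx : x ∉ cbDeriv S) :
    IsZero (stalkF (cokernel (etaF F)) x) := by
  obtain ⟨U, hxU, hU⟩ := isolating_open_of_not_mem_cbDeriv hS hx
  haveI := stalk_eta_isIso F hsupp hxU hU
  haveI : PreservesColimitsOfSize.{0, 0} (LStalk x) :=
    (stalkSkyscraperSheafAdjunction x).leftAdjoint_preservesColimits
  have e : (LStalk x).obj (cokernel (etaF F)) ≅ cokernel ((LStalk x).map (etaF F)) :=
    PreservesCokernel.iso (LStalk x) (etaF F)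
  exact (_root_.isZero_cokernel_of_epi _).of_iso e

lemma isZero_sheaf_of_stalks (F : SheafQ X) (h : ∀ x : X, IsZero (stalkF F x)) :
    IsZero F := by
  have hsub : ∀ U : (Opens ↑X)ᵒᵖ, IsZero (F.val.obj U) := by
    intro U
    have : Subsingleton (F.val.obj U) := ⟨fun s t => by
      apply TopCat.Presheaf.section_ext (X := X) (C := ModuleCat.{0} ℚ) F U.unop s t
      intro x hx
      exact eq_of_isZero_mod (h x) _ _⟩
    exact ModuleCat.isZero_of_subsingleton _
  rw [IsZero.iff_id_eq_zero]
  apply CategoryTheory.Sheaf.hom_ext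
  apply NatTrans.ext
  funext U
  exact (hsub U).eq_of_src _ _

lemma main_induction (d : ℕ) : ∀ j : ℕ, cbIter ↑X (j + d) = ∅ → ∀ F : SheafQ X,
    (∀ x : ↑X, x ∉ cbIter ↑X j → IsZero (stalkF F x)) →
    ∃ I : InjectiveResolution F, ∀ k, d ≤ k → IsZero (I.cocomplex.X k) := by
  induction d with
  | zero =>
    intro j hj F hsupp
    have hz : IsZero F := isZero_sheaf_of_stalks F (fun x => hsupp x (by
      intro hmem
      rw [Nat.add_zero] at hj
      rw [hj] at hmem
      exact hmem))
    haveI : Injective F := injective_of_isZero hz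
    refine ⟨InjectiveResolution.self F, fun k _ => ?_⟩
    match k with
    | 0 => exact hz.of_iso (HomologicalComplex.singleObjXSelf (ComplexShape.up ℕ) 0 F)
    | (k+1) => exact HomologicalComplex.isZero_single_obj_X _ 0 F _ (by omega)
  | succ d ih =>
    intro j hj F hsupp
    obtain ⟨J, hJ⟩ := ih (j+1) (by rw [show j+1+d = j+(d+1) by omega]; exact hj)
      (cokernel (etaF F))
      (fun x hx => by
        rw [cbIter_succ] at hx
        exact stalk_cokernel_isZero F (isClosed_cbIter j) hsupp hx)
    refine ⟨spliceInjectiveResolution (etaF F) J, fun k hk => ?_⟩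
    match k, hk with
    | (k+1), hk =>
      have h1 : (spliceInjectiveResolution (etaF F) J).cocomplex.X (k+1)
          = J.cocomplex.X k := rfl
      rw [h1]
      exact hJ k (by omega)

end SheafPart


/-- Let `X` be a Hausdorff scattered space of finite Cantor–Bendixson rank
`n`, i.e. `X^(n) = ∅` and `X^(j) ≠ ∅` for `j < n`.  Then every sheaf of `ℚ`-modules on `X`
admits an injective resolution of length at most `n - 1`: an injective resolution whose
terms in all degrees `k ≥ n` vanish.  In particular the injective dimension of the abelian
category of sheaves of `ℚ`-modules on `X` is at most `n - 1`. -/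
theorem stmt9 (X : TopCat.{0}) [T2Space X] (n : ℕ)
    (hrank : cbIter X n = ∅) (hleast : ∀ j < n, cbIter X j ≠ ∅)
    (F : SheafQ X) :
    ∃ I : InjectiveResolution F, ∀ k : ℕ, n ≤ k → IsZero (I.cocomplex.X k) := by
  obtain ⟨I, hI⟩ := main_induction n 0 (by rw [Nat.zero_add]; exact hrank) F
    (fun x hx => absurd (Set.mem_univ x) (by simpa [cbIter] using hx))
  exact ⟨I, hI⟩

end
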